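/- Let A = {A_1,...,A_L} be strings and W a common subsequence. For 0 ≤ k ≤ |W|, the set BreakPoints(A,W) of indices k such that the strings Middle(A_l,W,k) share a common character is empty if and only if W is a maximal common subsequence of A. -/

import Mathlib

open List

/-- Length of the shortest prefix of `A` containing `W` as a subsequence. -/
noncomputable def minPrefixLen {α : Type*} (A W : List α) : ℕ :=
  sInf {n | W <+ A.take n}

/-- Length of the shortest suffix of `A` containing `W` as a subsequence. -/
noncomputable def minSuffixLen {α : Type*} (A W : List α) : ℕ :=
  sInf {n | W <+ A.drop (A.length - n)}

/-- `Middle A W k`: what remains of `A` after deleting the shortest prefix containing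
`W.take k` as a subsequence and the shortest suffix containing `W.drop k`. -/
noncomputable def Middle {α : Type*} (A W : List α) (k : ℕ) : List α :=
  (A.take (A.length - minSuffixLen A (W.drop k))).drop (minPrefixLen A (W.take k))

lemma minPrefix_spec {α : Type*} {A W : List α} (h : W <+ A) :
    W <+ A.take (minPrefixLen A W) :=
  Nat.sInf_mem (⟨A.length, by simpa using h⟩ : {n | W <+ A.take n}.Nonempty)

lemma minPrefix_le {α : Type*} {A W : List α} {n : ℕ} (h : W <+ A.take n) :
    minPrefixLen A W ≤ n := Nat.sInf_le h

lemma minSuffix_spec {α : Type*} {A W : List α} (h : W <+ A) :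
    W <+ A.drop (A.length - minSuffixLen A W) :=
  Nat.sInf_mem (⟨A.length, by simpa using h⟩ : {n | W <+ A.drop (A.length - n)}.Nonempty)

lemma minSuffix_le {α : Type*} {A W : List α} {n : ℕ} (h : W <+ A.drop (A.length - n)) :
    minSuffixLen A W ≤ n := Nat.sInf_le h

lemma sublist_decomp {α : Type*} {l₁ l₂ A : List α} {c : α}
    (h : l₁ ++ c :: l₂ <+ A) :
    ∃ A₁ A₂, A = A₁ ++ c :: A₂ ∧ l₁ <+ A₁ ∧ l₂ <+ A₂ := by
  rw [append_sublist_iff] at h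
  obtain ⟨r₁, r₂, rfl, h₁, h₂⟩ := h
  rw [cons_sublist_iff] at h₂
  obtain ⟨s₁, s₂, rfl, hc, h₂⟩ := h₂
  obtain ⟨u, v, rfl⟩ := append_of_mem hc
  exact ⟨r₁ ++ u, v ++ s₂, by simp, h₁.trans (sublist_append_left _ _),
    h₂.trans (sublist_append_right _ _)⟩

lemma mem_middle_iff {α : Type*} {A W : List α} {k : ℕ} (hWA : W <+ A) (c : α) :
    c ∈ Middle A W k ↔ (W.take k ++ c :: W.drop k) <+ A := by
  set P := minPrefixLen A (W.take k) with hP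
  set S := minSuffixLen A (W.drop k) with hS
  constructor
  · intro hc
    have hPq : P < A.length - S := by
      by_contra hle
      push_neg at hle
      have : Middle A W k = [] := by
        apply List.drop_eq_nil_of_le
        simp only [length_take]
        omega
      rw [this] at hc
      exact absurd hc not_mem_nil
    have h1 : W.take k <+ A.take P := minPrefix_spec ((take_sublist k W).trans hWA)
    have h2 : W.drop k <+ A.drop (A.length - S) := minSuffix_spec ((drop_sublist k W).trans hWA)
    obtain ⟨m₁, m₂, hm⟩ := append_of_mem hc
    have hA : A = A.take P ++ (m₁ ++ c :: m₂) ++ A.drop (A.length - S) := by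
      rw [← hm]
      have : A.take P ++ Middle A W k = A.take (A.length - S) := by
        unfold Middle
        rw [← hP, ← hS]
        conv_rhs => rw [← take_append_drop P (A.take (A.length - S))]
        rw [take_take, min_eq_left hPq.le]
      rw [this, take_append_drop]
    rw [hA]
    have key : W.take k ++ c :: W.drop k <+
        A.take P ++ (m₁ ++ (c :: (m₂ ++ A.drop (A.length - S)))) :=
      Sublist.append h1
        ((Sublist.cons₂ c (h2.trans (sublist_append_right m₂ _))).trans
          (sublist_append_right m₁ _))
    simpa using key
  · intro h
    obtain ⟨A₁, A₂, rfl, h₁, h₂⟩ := sublist_decomp h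
    have hlen : (A₁ ++ c :: A₂).length = A₁.length + 1 + A₂.length := by simp; omega
    have hPle : P ≤ A₁.length := by
      apply minPrefix_le
      rw [take_append_of_le_length le_rfl]
      simpa using h₁
    have hSle : S ≤ A₂.length := by
      apply minSuffix_le
      have : (A₁ ++ c :: A₂).length - A₂.length = A₁.length + 1 := by omega
      rw [this]
      have h3 : drop (A₁.length + 1) (A₁ ++ c :: A₂) = A₂ := by
        simpa using (List.drop_append (l₁ := A₁) (l₂ := c :: A₂) 1)
      rw [h3]; exact h₂
    unfold Middle
    rw [← hP, ← hS]
    have hq : (A₁ ++ c :: A₂).length - S = A₁.length + 1 + (A₂.length - S) := by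
      rw [hlen]; omega
    rw [hq]
    have : take (A₁.length + 1 + (A₂.length - S)) (A₁ ++ c :: A₂)
        = A₁ ++ c :: A₂.take (A₂.length - S) := by
      rw [show A₁.length + 1 + (A₂.length - S) = A₁.length + (1 + (A₂.length - S)) by omega]
      rw [take_append, Nat.add_comm 1 _]
      rw [take_of_length_le (by omega), Nat.add_sub_cancel_left]
      rfl
    rw [this, drop_append_of_le_length hPle]
    simp

/-- `W` is a common subsequence of all strings in `𝒜`. -/
def IsCommonSubseq {α : Type*} (𝒜 : Finset (List α)) (W : List α) : Prop :=
  ∀ A ∈ 𝒜, W <+ A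

/-- `W` is a maximal common subsequence of `𝒜`: it is a common subsequence and
inserting any single character at any position never yields a common subsequence. -/
def IsMCS {α : Type*} (𝒜 : Finset (List α)) (W : List α) : Prop :=
  IsCommonSubseq 𝒜 W ∧
    ∀ (c : α) (k : ℕ), k ≤ W.length →
      ¬ IsCommonSubseq 𝒜 (W.take k ++ c :: W.drop k)

/-- The set of breakpoints: indices `k` at which a character common to all middle
segments can be inserted into `W`. -/
def BreakPoints {α : Type*} (𝒜 : Finset (List α)) (W : List α) : Set ℕ :=
  {k | k ≤ W.length ∧ ∃ c : α, ∀ A ∈ 𝒜, c ∈ Middle A W k}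


theorem stmt15 {α : Type*} (𝒜 : Finset (List α)) (W : List α)
    (hW : IsCommonSubseq 𝒜 W) :
    BreakPoints 𝒜 W = ∅ ↔ IsMCS 𝒜 W := by
  constructor
  · intro hBP
    refine ⟨hW, fun c k hk hcs => ?_⟩
    have hkmem : k ∈ BreakPoints 𝒜 W := by
      refine ⟨hk, c, fun A hA => ?_⟩
      exact (mem_middle_iff (hW A hA) c).mpr (hcs A hA)
    rw [hBP] at hkmem
    exact hkmem
  · intro hMCS
    ext k
    simp only [Set.mem_empty_iff_false, iff_false]
    rintro ⟨hk, c, hc⟩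
    exact hMCS.2 c k hk fun A hA => (mem_middle_iff (hW A hA) c).mp (hc A hA)
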